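/- Let n ≥ 1, let Σ₀ be a real symmetric positive definite n×n matrix with smallest eigenvalue λmin > 0, and let Δ be a nonzero real symmetric positive semidefinite n×n matrix such that Σ₀ − Δ is positive definite and such that B := Σ₀^{-1/2} Δ Σ₀^{-1/2} satisfies ‖B‖₂ < 1/2 in spectral norm. Define U := (1/2)(log det Σ₀ − log det(Σ₀ − Δ)) and ΔIMSPE := tr(Δ)/n. Then | U/ΔIMSPE − (n/2)·tr(Σ₀⁻¹Δ)/tr(Δ) | ≤ (n/(2 λmin))·‖B‖₂. -/

import Mathlib

open Matrix

/-- The square root of a positive semidefinite matrix, as defined in the older Mathlib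
(`Matrix.PosSemidef.sqrt`, since removed). -/
noncomputable def Matrix.PosSemidef.sqrt {n 𝕜 : Type*} [Fintype n] [DecidableEq n] [RCLike 𝕜]
    [PartialOrder 𝕜] [StarOrderedRing 𝕜]
    {A : Matrix n n 𝕜} (hA : A.PosSemidef) : Matrix n n 𝕜 :=
  hA.1.eigenvectorUnitary.1 * diagonal ((↑) ∘ (√·) ∘ hA.1.eigenvalues) *
    (star hA.1.eigenvectorUnitary : Matrix n n 𝕜)

/-- The spectral norm (largest singular value) of a real square matrix,
realized as the operator norm of the induced map on Euclidean space. -/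
noncomputable def specNorm {n : ℕ} (B : Matrix (Fin n) (Fin n) ℝ) : ℝ :=
  ‖(Matrix.toEuclideanLin B).toContinuousLinearMap‖

/- ### Auxiliary lemmas -/

lemma Matrix.PosSemidef.sqrt_mul_self {n : ℕ} {P : Matrix (Fin n) (Fin n) ℝ}
    (hP : P.PosSemidef) : hP.sqrt * hP.sqrt = P := by
  have hU := (Matrix.mem_unitaryGroup_iff').mp hP.1.eigenvectorUnitary.2
  have hD : (diagonal (RCLike.ofReal ∘ (√·) ∘ hP.1.eigenvalues) : Matrix (Fin n) (Fin n) ℝ) *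
      diagonal (RCLike.ofReal ∘ (√·) ∘ hP.1.eigenvalues) = diagonal (RCLike.ofReal ∘ hP.1.eigenvalues) := by
    rw [diagonal_mul_diagonal]
    congr 1
    funext i
    simp [Real.mul_self_sqrt (hP.eigenvalues_nonneg i)]
  conv_rhs => rw [hP.1.spectral_theorem, Unitary.conjStarAlgAut_apply]
  unfold Matrix.PosSemidef.sqrt
  rw [show ∀ a b c d e f : Matrix (Fin n) (Fin n) ℝ, a * b * c * (d * e * f)
      = a * (b * (c * d) * e) * f from fun a b c d e f => by simp only [mul_assoc], hU, mul_one, hD]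

lemma Matrix.PosSemidef.posSemidef_sqrt {n : ℕ} {P : Matrix (Fin n) (Fin n) ℝ}
    (hP : P.PosSemidef) : hP.sqrt.PosSemidef := by
  have hd : (diagonal ((↑) ∘ (√·) ∘ hP.1.eigenvalues) : Matrix (Fin n) (Fin n) ℝ).PosSemidef :=
    posSemidef_diagonal_iff.mpr fun i => by simp [Real.sqrt_nonneg]
  have := hd.mul_mul_conjTranspose_same (hP.1.eigenvectorUnitary : Matrix (Fin n) (Fin n) ℝ)
  rw [← star_eq_conjTranspose] at this
  exact this

private lemma log_one_sub_ge_aux {x : ℝ} (h0 : 0 ≤ x) (h2 : x ≤ 1/2) :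
    -x - x^2 ≤ Real.log (1 - x) := by
  set f : ℝ → ℝ := fun y => Real.log (1 - y) + y + y^2 with hf
  have hmono : MonotoneOn f (Set.Icc 0 (1/2)) := by
    apply monotoneOn_of_hasDerivWithinAt_nonneg (convex_Icc _ _)
      (f' := fun y => -(1-y)⁻¹ + (1 + 2*y))
    · apply ContinuousOn.add
      apply ContinuousOn.add
      · apply ContinuousOn.log (continuousOn_const.sub continuousOn_id)
        intro y hy
        simp only [Set.mem_Icc] at hy
        simp only [Pi.sub_apply, id_eq]
        nlinarith [hy.1, hy.2]
      · exact continuousOn_id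
      · exact (continuousOn_id.pow 2)
    · intro y hy
      rw [interior_Icc] at hy
      simp only [Set.mem_Ioo] at hy
      have h1y : (1 : ℝ) - y ≠ 0 := by nlinarith [hy.1, hy.2]
      have hlog : HasDerivAt (fun y : ℝ => Real.log (1 - y)) (-(1-y)⁻¹) y := by
        have := (Real.hasDerivAt_log h1y).comp y ((hasDerivAt_id y).const_sub 1)
        have e : -(1-y)⁻¹ = (1 - y)⁻¹ * -1 := by ring
        rw [e]
        exact this
      have : HasDerivAt f (-(1-y)⁻¹ + 1 + 2*y) y := by
        have h3 := (hlog.add (hasDerivAt_id y)).add (hasDerivAt_pow 2 y)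
        have e : (-(1-y)⁻¹ + 1 + 2*y) = -(1-y)⁻¹ + 1 + ((2:ℕ):ℝ) * y^(2-1) := by norm_num
        rw [e]
        exact h3
      exact (by ring_nf; ring_nf at this; exact this :
        HasDerivAt f (-(1-y)⁻¹ + (1 + 2*y)) y).hasDerivWithinAt
    · intro y hy
      rw [interior_Icc] at hy
      simp only [Set.mem_Ioo] at hy
      have h1y : (0 : ℝ) < 1 - y := by nlinarith [hy.2]
      rw [← sub_nonneg]
      have heq : -(1-y)⁻¹ + (1 + 2*y) - 0 = (y*(1-2*y))/(1-y) := by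
        field_simp
        ring
      rw [heq]
      have h2y : (0:ℝ) ≤ 1 - 2*y := by nlinarith [hy.2]
      exact div_nonneg (mul_nonneg hy.1.le h2y) h1y.le
  have h0' : f 0 ≤ f x := hmono (by simp) (by constructor <;> linarith) h0
  simp only [hf] at h0'
  norm_num at h0'
  linarith

private lemma trace_eq_sum_eigs_aux {n : ℕ} {A : Matrix (Fin n) (Fin n) ℝ}
    (hA : A.IsHermitian) : A.trace = ∑ i, hA.eigenvalues i := by
  nth_rewrite 1 [hA.spectral_theorem]
  rw [Unitary.conjStarAlgAut_apply, Matrix.trace_mul_cycle,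
    (Matrix.mem_unitaryGroup_iff').mp (hA.eigenvectorUnitary).2, one_mul]
  simp [Matrix.trace_diagonal]

private lemma psd_trace_nonneg_aux {n : ℕ} {A : Matrix (Fin n) (Fin n) ℝ}
    (hA : A.PosSemidef) : 0 ≤ A.trace := by
  rw [trace_eq_sum_eigs_aux hA.isHermitian]
  exact Finset.sum_nonneg fun i _ => hA.eigenvalues_nonneg i

private lemma psd_trace_mul_nonneg_aux {n : ℕ} {P Q : Matrix (Fin n) (Fin n) ℝ}
    (hP : P.PosSemidef) (hQ : Q.PosSemidef) : 0 ≤ (P * Q).trace := by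
  have h2 : (hP.sqrt * Q * hP.sqrt).PosSemidef := by
    have := hQ.mul_mul_conjTranspose_same hP.sqrt
    rwa [hP.posSemidef_sqrt.isHermitian.eq] at this
  calc (0:ℝ) ≤ (hP.sqrt * Q * hP.sqrt).trace := psd_trace_nonneg_aux h2
    _ = (hP.sqrt * (hP.sqrt * Q)).trace := by rw [Matrix.trace_mul_cycle, mul_assoc]
    _ = (P * Q).trace := by rw [← mul_assoc, hP.sqrt_mul_self]

private lemma sub_smul_one_psd_aux {n : ℕ} (hn : 1 ≤ n) {S0 : Matrix (Fin n) (Fin n) ℝ}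
    (hS0 : S0.PosDef) {lmin : ℝ} (hmin : lmin = ⨅ i, hS0.isHermitian.eigenvalues i) :
    (S0 - lmin • 1).PosSemidef := by
  have : Nonempty (Fin n) := Fin.pos_iff_nonempty.mp hn
  have hle : ∀ i, lmin ≤ hS0.isHermitian.eigenvalues i := fun i =>
    hmin ▸ ciInf_le (Set.Finite.bddBelow (Set.finite_range _)) i
  set U : Matrix (Fin n) (Fin n) ℝ :=
    (hS0.isHermitian.eigenvectorUnitary : Matrix (Fin n) (Fin n) ℝ) with hU
  have hUU : U * star U = 1 :=
    (Matrix.mem_unitaryGroup_iff).mp (hS0.isHermitian.eigenvectorUnitary).2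
  have key : U * (lmin • 1) * star U = lmin • 1 := by
    rw [mul_smul_comm, mul_one, smul_mul_assoc, hUU]
  have hdiag : (diagonal (RCLike.ofReal ∘ hS0.isHermitian.eigenvalues) :
      Matrix (Fin n) (Fin n) ℝ) - lmin • 1
      = diagonal (fun i => hS0.isHermitian.eigenvalues i - lmin) := by
    rw [← diagonal_one, ← diagonal_smul, diagonal_sub]
    congr 1
    funext i
    simp [Function.comp]
  have h1 : S0 - lmin • 1
      = U * (diagonal (fun i => hS0.isHermitian.eigenvalues i - lmin)) * star U := by
    rw [← hdiag, mul_sub, sub_mul, key, hU, ← (hS0.isHermitian.spectral_theorem.trans (Unitary.conjStarAlgAut_apply _ _))]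
  rw [h1]
  have hd : (diagonal (fun i => hS0.isHermitian.eigenvalues i - lmin) :
      Matrix (Fin n) (Fin n) ℝ).PosSemidef :=
    posSemidef_diagonal_iff.mpr fun i => sub_nonneg.mpr (hle i)
  have := hd.mul_mul_conjTranspose_same U
  rwa [← star_eq_conjTranspose] at this

private lemma psd_trace_pos_aux {n : ℕ} {Δ : Matrix (Fin n) (Fin n) ℝ}
    (hΔne : Δ ≠ 0) (hΔ : Δ.PosSemidef) : 0 < Δ.trace := by
  rw [trace_eq_sum_eigs_aux hΔ.isHermitian]
  have hne : hΔ.isHermitian.eigenvalues ≠ 0 := by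
    intro h
    apply hΔne
    have := hΔ.isHermitian.spectral_theorem
    rwa [h, Pi.comp_zero, RCLike.ofReal_zero,
      (by rfl : Function.const (Fin n) (0 : ℝ) = fun _ ↦ 0),
      diagonal_zero, map_zero] at this
  obtain ⟨i, hi⟩ := Function.ne_iff.mp hne
  exact Finset.sum_pos' (fun j _ => hΔ.eigenvalues_nonneg j)
    ⟨i, Finset.mem_univ i, lt_of_le_of_ne (hΔ.eigenvalues_nonneg i) (Ne.symm hi)⟩

private lemma det_one_sub_aux {n : ℕ} {A : Matrix (Fin n) (Fin n) ℝ} (hA : A.IsHermitian) :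
    (1 - A).det = ∏ i, (1 - hA.eigenvalues i) := by
  have h1 : (1 : Matrix (Fin n) (Fin n) ℝ) - A
      = (hA.eigenvectorUnitary : Matrix (Fin n) (Fin n) ℝ) *
        (1 - diagonal (RCLike.ofReal ∘ hA.eigenvalues)) *
        (star (hA.eigenvectorUnitary) : Matrix (Fin n) (Fin n) ℝ) := by
    rw [mul_sub, sub_mul, mul_one,
      (Matrix.mem_unitaryGroup_iff).mp (hA.eigenvectorUnitary).2, ← (hA.spectral_theorem.trans (Unitary.conjStarAlgAut_apply _ _))]
  rw [h1, det_mul_right_comm, (Matrix.mem_unitaryGroup_iff).mp (hA.eigenvectorUnitary).2, one_mul]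
  have h2 : (1 : Matrix (Fin n) (Fin n) ℝ) - diagonal (RCLike.ofReal ∘ hA.eigenvalues)
      = diagonal (fun i => 1 - hA.eigenvalues i) := by
    rw [← diagonal_one, diagonal_sub]
    rfl
  rw [h2, det_diagonal]

private lemma eig_abs_le_specNorm_aux {n : ℕ} {B : Matrix (Fin n) (Fin n) ℝ}
    (hB : B.IsHermitian) (i : Fin n) : |hB.eigenvalues i| ≤ specNorm B := by
  set v : EuclideanSpace ℝ (Fin n) := hB.eigenvectorBasis i with hv
  have hnv : ‖v‖ = 1 := hB.eigenvectorBasis.orthonormal.1 i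
  have happ : (Matrix.toEuclideanLin B).toContinuousLinearMap v = hB.eigenvalues i • v := by
    show Matrix.toEuclideanLin B v = _
    rw [Matrix.toEuclideanLin_apply]
    have := hB.mulVec_eigenvectorBasis i
    apply (WithLp.equiv 2 (Fin n → ℝ)).injective
    simpa using congrArg (fun w => w) this
  have h1 : ‖(Matrix.toEuclideanLin B).toContinuousLinearMap v‖
      ≤ ‖(Matrix.toEuclideanLin B).toContinuousLinearMap‖ * ‖v‖ :=
    ContinuousLinearMap.le_opNorm _ _
  rw [happ, norm_smul, hnv, mul_one, Real.norm_eq_abs] at h1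
  simp only [specNorm]
  linarith [h1]

/-- Key quantitative estimate in the proof of Theorem 1: for a symmetric positive
definite `Σ₀` with smallest eigenvalue `λmin > 0` and a nonzero symmetric positive
semidefinite `Δ` with `Σ₀ - Δ` positive definite and
`B = Σ₀^{-1/2} Δ Σ₀^{-1/2}` of spectral norm `< 1/2`, the
mutual-information-to-IMSPE ratio differs from the spectrally weighted trace ratio
`(n/2)·tr(Σ₀⁻¹Δ)/tr(Δ)` by at most `(n/(2 λmin))·‖B‖₂`. -/
theorem mi_imspe_ratio_quantitative_estimate
    {n : ℕ} (hn : 1 ≤ n)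
    (S0 Δ : Matrix (Fin n) (Fin n) ℝ)
    (hS0 : S0.PosDef)
    (lmin : ℝ) (hlmin : 0 < lmin)
    (hmin : lmin = ⨅ i, hS0.isHermitian.eigenvalues i)
    (hΔne : Δ ≠ 0) (hΔ : Δ.PosSemidef) (hpd : (S0 - Δ).PosDef)
    (B : Matrix (Fin n) (Fin n) ℝ)
    (hB : B = (hS0.posSemidef.sqrt)⁻¹ * Δ * (hS0.posSemidef.sqrt)⁻¹)
    (hBnorm : specNorm B < 1 / 2) :
    |((1 / 2) * (Real.log S0.det - Real.log (S0 - Δ).det)) / (Δ.trace / (n : ℝ))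
        - ((n : ℝ) / 2) * ((S0⁻¹ * Δ).trace / Δ.trace)|
      ≤ ((n : ℝ) / (2 * lmin)) * specNorm B := by
  set S : Matrix (Fin n) (Fin n) ℝ := hS0.posSemidef.sqrt with hSdef
  have hSsq : S * S = S0 := hS0.posSemidef.sqrt_mul_self
  have hdetS0 : 0 < S0.det := hS0.det_pos
  have hdetS : S.det ≠ 0 := by
    intro h
    rw [← hSsq, det_mul, h, mul_zero] at hdetS0
    exact lt_irrefl _ hdetS0
  have hSH : Sᴴ = S := hS0.posSemidef.posSemidef_sqrt.isHermitian.eq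
  have hSu : IsUnit S.det := isUnit_iff_ne_zero.mpr hdetS
  have hSinv : S * S⁻¹ = 1 := Matrix.mul_nonsing_inv _ hSu
  have hSinv' : S⁻¹ * S = 1 := Matrix.nonsing_inv_mul _ hSu
  -- B is PSD
  have hBpsd : B.PosSemidef := by
    rw [hB]
    have := hΔ.mul_mul_conjTranspose_same S⁻¹
    rwa [conjTranspose_nonsing_inv, hSH] at this
  have hBH : B.IsHermitian := hBpsd.isHermitian
  set μ : Fin n → ℝ := hBH.eigenvalues with hμdef
  set b : ℝ := specNorm B with hbdef
  have hb0 : 0 ≤ b := norm_nonneg _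
  have hμ0 : ∀ i, 0 ≤ μ i := fun i => hBpsd.eigenvalues_nonneg i
  have hμb : ∀ i, μ i ≤ b := fun i => (abs_le.mp (eig_abs_le_specNorm_aux hBH i)).2
  have hμhalf : ∀ i, μ i ≤ 1/2 := fun i => le_of_lt (lt_of_le_of_lt (hμb i) hBnorm)
  have h1μ : ∀ i, 0 < 1 - μ i := fun i => by linarith [hμhalf i]
  -- Δ = S * B * S
  have hΔeq : S * B * S = Δ := by
    rw [hB]
    calc S * (S⁻¹ * Δ * S⁻¹) * S = S * S⁻¹ * Δ * (S⁻¹ * S) := by simp only [mul_assoc]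
      _ = Δ := by rw [hSinv, hSinv', one_mul, mul_one]
  have hS0mΔ : S0 - Δ = S * (1 - B) * S := by
    rw [mul_sub, sub_mul, mul_one, hSsq, hΔeq]
  -- determinant identities
  have hdet1B : (1 - B).det = ∏ i, (1 - μ i) := det_one_sub_aux hBH
  have hprodpos : (0:ℝ) < ∏ i, (1 - μ i) :=
    Finset.prod_pos fun i _ => h1μ i
  have hdet1Bpos : 0 < (1 - B).det := hdet1B ▸ hprodpos
  have hdetfac : (S0 - Δ).det = S0.det * (1 - B).det := by
    rw [hS0mΔ, det_mul, det_mul]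
    rw [← hSsq, det_mul]
    ring
  have hlogdet : Real.log S0.det - Real.log (S0 - Δ).det
      = -∑ i, Real.log (1 - μ i) := by
    rw [hdetfac, Real.log_mul (ne_of_gt hdetS0) (ne_of_gt hdet1Bpos), hdet1B,
      Real.log_prod (fun i _ => ne_of_gt (h1μ i))]
    ring
  -- traces
  have htrB : B.trace = ∑ i, μ i := trace_eq_sum_eigs_aux hBH
  have htrS0inv : (S0⁻¹ * Δ).trace = B.trace := by
    have hS0inv : S0⁻¹ = S⁻¹ * S⁻¹ := by rw [← hSsq, Matrix.mul_inv_rev]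
    rw [hS0inv, mul_assoc, Matrix.trace_mul_comm, hB]
  have htrΔ : Δ.trace = (B * S0).trace := by
    rw [← hΔeq, Matrix.trace_mul_cycle, hSsq, Matrix.trace_mul_comm]
  set T : ℝ := ∑ i, μ i with hTdef
  have hT0 : 0 ≤ T := Finset.sum_nonneg fun i _ => hμ0 i
  have htrΔpos : 0 < Δ.trace := psd_trace_pos_aux hΔne hΔ
  -- lmin * T ≤ trace Δ
  have hlminT : lmin * T ≤ Δ.trace := by
    have h := psd_trace_mul_nonneg_aux hBpsd (sub_smul_one_psd_aux hn hS0 hmin)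
    rw [mul_sub, Matrix.trace_sub, mul_smul_comm, mul_one, Matrix.trace_smul,
      smul_eq_mul] at h
    rw [htrΔ]
    rw [htrB] at h
    linarith
  -- sum estimates
  set D : ℝ := ∑ i, (-(Real.log (1 - μ i)) - μ i) with hDdef
  have hterm0 : ∀ i, 0 ≤ -(Real.log (1 - μ i)) - μ i := by
    intro i
    have := Real.log_le_sub_one_of_pos (h1μ i)
    linarith
  have htermub : ∀ i, -(Real.log (1 - μ i)) - μ i ≤ μ i * b := by
    intro i
    have h1 := log_one_sub_ge_aux (hμ0 i) (hμhalf i)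
    have h2 : μ i ^ 2 ≤ μ i * b := by
      have := mul_le_mul_of_nonneg_left (hμb i) (hμ0 i)
      nlinarith
    linarith
  have hD0 : 0 ≤ D := Finset.sum_nonneg fun i _ => hterm0 i
  have hDub : D ≤ b * T := by
    calc D ≤ ∑ i, μ i * b := Finset.sum_le_sum fun i _ => htermub i
      _ = b * T := by rw [hTdef, Finset.mul_sum]; exact Finset.sum_congr rfl fun i _ => by ring
  have hsumlog : -∑ i, Real.log (1 - μ i) = T + D := by
    rw [hTdef, hDdef, ← Finset.sum_add_distrib, ← Finset.sum_neg_distrib]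
    exact Finset.sum_congr rfl fun i _ => by ring
  -- final computation
  have hn' : (0:ℝ) < (n:ℝ) := by exact_mod_cast Nat.lt_of_lt_of_le Nat.zero_lt_one hn
  rw [hlogdet, hsumlog, htrS0inv, htrB]
  have hexpr : (1 / 2) * (T + D) / (Δ.trace / (n:ℝ)) - ((n:ℝ) / 2) * (T / Δ.trace)
      = ((n:ℝ) * D) / (2 * Δ.trace) := by
    field_simp
    ring
  rw [hexpr, abs_of_nonneg (by positivity)]
  have hr : ((n:ℝ) / (2 * lmin)) * b = ((n:ℝ) * b) / (2 * lmin) := by ring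
  rw [hr, div_le_div_iff₀ (by positivity) (by positivity)]
  have c1 : (n:ℝ) * D * (2*lmin) ≤ (n:ℝ) * (b*T) * (2*lmin) := by
    apply mul_le_mul_of_nonneg_right _ (by positivity)
    exact mul_le_mul_of_nonneg_left hDub hn'.le
  have c2 : (n:ℝ) * (b*T) * (2*lmin) ≤ (n:ℝ) * b * (2*Δ.trace) := by
    nlinarith [mul_le_mul_of_nonneg_left hlminT (mul_nonneg hn'.le hb0)]
  linarith
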